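/- For every positive integer n there exists a finite simple graph G such that Γ(G) ≥ n, b(G) ≥ n, and z(G) ≤ 3. -/

import Mathlib

/-- A proper vertex coloring of `G` using exactly the colors `{1, …, k}`:
every vertex gets a color in `{1, …, k}`, adjacent vertices get different
colors, and every color in `{1, …, k}` is used. -/
def IsProperColoring {V : Type*} (G : SimpleGraph V) (k : ℕ) (c : V → ℕ) : Prop :=
  (∀ v, c v ∈ Finset.Icc 1 k) ∧
  (∀ u v, G.Adj u v → c u ≠ c v) ∧
  (∀ i ∈ Finset.Icc 1 k, ∃ v, c v = i)

/-- A Grundy coloring of `G` using `k` colors: a proper coloring using `k` colors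
such that every vertex of color `j` has, for each color `i < j`, a neighbor of color `i`. -/
def IsGrundyColoring {V : Type*} (G : SimpleGraph V) (k : ℕ) (c : V → ℕ) : Prop :=
  IsProperColoring G k c ∧
  ∀ v, ∀ i ∈ Finset.Icc 1 k, i < c v → ∃ w, G.Adj v w ∧ c w = i

/-- In a coloring `c` of `G` with colors `{1, …, k}`, a vertex `v` is color-dominating
if for every color `j ∈ {1, …, k}` different from the color of `v`, the vertex `v`
has a neighbor of color `j`. -/
def IsCDVertex {V : Type*} (G : SimpleGraph V) (k : ℕ) (c : V → ℕ) (v : V) : Prop :=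
  ∀ j ∈ Finset.Icc 1 k, j ≠ c v → ∃ w, G.Adj v w ∧ c w = j

/-- A color-dominating coloring (b-coloring) of `G` using `k` colors: a proper coloring
using `k` colors in which every color class contains a color-dominating vertex. -/
def IsBColoring {V : Type*} (G : SimpleGraph V) (k : ℕ) (c : V → ℕ) : Prop :=
  IsProperColoring G k c ∧
  ∀ i ∈ Finset.Icc 1 k, ∃ v, c v = i ∧ IsCDVertex G k c v

/-- A z-coloring of `G` using `k` colors: a proper coloring which is simultaneously
a Grundy coloring and a color-dominating coloring, and which admits color-dominating
vertices `u 1, …, u k` with `c (u j) = j` such that `u k` is adjacent to each `u j`, `j ≠ k`. -/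
def IsZColoring {V : Type*} (G : SimpleGraph V) (k : ℕ) (c : V → ℕ) : Prop :=
  IsGrundyColoring G k c ∧ IsBColoring G k c ∧
  ∃ u : ℕ → V,
    (∀ j ∈ Finset.Icc 1 k, c (u j) = j ∧ IsCDVertex G k c (u j)) ∧
    (∀ j ∈ Finset.Icc 1 k, j ≠ k → G.Adj (u k) (u j))

/-- The Grundy number of `G`: the maximum `k` such that `G` admits a Grundy coloring
using `k` colors. -/
noncomputable def grundyNumber {V : Type*} (G : SimpleGraph V) : ℕ :=
  sSup {k | ∃ c : V → ℕ, IsGrundyColoring G k c}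

/-- The b-chromatic number of `G`: the maximum `k` such that `G` admits a b-coloring
using `k` colors. -/
noncomputable def bNumber {V : Type*} (G : SimpleGraph V) : ℕ :=
  sSup {k | ∃ c : V → ℕ, IsBColoring G k c}

/-- The z-chromatic number of `G`: the maximum `k` such that `G` admits a z-coloring
using `k` colors. -/
noncomputable def zNumber {V : Type*} (G : SimpleGraph V) : ℕ :=
  sSup {k | ∃ c : V → ℕ, IsZColoring G k c}

/- ### Construction: (crown graph K_{m,m} minus perfect matching, plus one matching
edge back) ⊔ (m disjoint stars K_{1,m-1}). -/

abbrev Vtx (m : ℕ) : Type := (Fin m × Bool) ⊕ (Fin m × Fin m)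

def adjFun (m : ℕ) : Vtx m → Vtx m → Prop
  | Sum.inl x, Sum.inl y => x.2 ≠ y.2 ∧ (x.1.val ≠ y.1.val ∨ (x.1.val = 0 ∧ y.1.val = 0))
  | Sum.inr x, Sum.inr y => x.1 = y.1 ∧ x.2 ≠ y.2 ∧ (x.2 = x.1 ∨ y.2 = y.1)
  | _, _ => False

def GG (m : ℕ) : SimpleGraph (Vtx m) where
  Adj := adjFun m
  symm := ⟨by
    rintro (x | x) (y | y) h <;> simp only [adjFun] at h ⊢ <;> tauto⟩
  loopless := ⟨by
    rintro (x | x) h <;> simp only [adjFun] at h <;> tauto⟩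

lemma GG_adj_ll {m : ℕ} {p q : Fin m} {s s' : Bool} :
    (GG m).Adj (Sum.inl (p, s)) (Sum.inl (q, s')) ↔
      s ≠ s' ∧ (p.val ≠ q.val ∨ (p.val = 0 ∧ q.val = 0)) := Iff.rfl

lemma GG_adj_rr {m : ℕ} {s t s' t' : Fin m} :
    (GG m).Adj (Sum.inr (s, t)) (Sum.inr (s', t')) ↔
      s = s' ∧ t ≠ t' ∧ (t = s ∨ t' = s') := Iff.rfl

lemma GG_adj_lr {m : ℕ} {a : Fin m × Bool} {b : Fin m × Fin m} :
    ¬ (GG m).Adj (Sum.inl a) (Sum.inr b) := fun h => h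

lemma GG_adj_rl {m : ℕ} {a : Fin m × Bool} {b : Fin m × Fin m} :
    ¬ (GG m).Adj (Sum.inr b) (Sum.inl a) := fun h => h

/-- The Grundy coloring with `m+1` colors. -/
def cG (m : ℕ) : Vtx m → ℕ
  | Sum.inl x => if x.1.val = 0 then (if x.2 then m + 1 else m) else x.1.val
  | Sum.inr x => if x.2 = x.1 then 2 else 1

/-- The b-coloring with `m` colors. -/
def cB (m : ℕ) : Vtx m → ℕ
  | Sum.inl x => if x.2 then 2 else 1
  | Sum.inr x => x.2.val + 1

lemma proper_card_le {V : Type*} [Fintype V] [Nonempty V] {G : SimpleGraph V} {k : ℕ}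
    {c : V → ℕ} (h : IsProperColoring G k c) : k ≤ Fintype.card V := by
  classical
  let f : ℕ → V := fun i => if hh : ∃ v, c v = i then hh.choose else Classical.arbitrary V
  have hf : ∀ i ∈ Finset.Icc 1 k, c (f i) = i := by
    intro i hi
    have hh : ∃ v, c v = i := h.2.2 i hi
    simp only [f]
    rw [dif_pos hh]
    exact hh.choose_spec
  have : (Finset.Icc 1 k).card ≤ (Finset.univ : Finset V).card := by
    apply Finset.card_le_card_of_injOn f (fun a _ => Finset.mem_univ _)
    intro a ha b hb hab
    rw [← hf a ha, ← hf b hb, hab]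
  rw [Finset.card_univ] at this
  rw [Nat.card_Icc] at this
  omega

@[simp] lemma val_mk' {m i : ℕ} (h : i < m) : ((⟨i, h⟩ : Fin m)).val = i := rfl

lemma cG_pair {m i : ℕ} (h : i < m) (hi : i ≠ 0) (s : Bool) :
    cG m (Sum.inl (⟨i, h⟩, s)) = i := by
  simp only [cG, val_mk']
  rw [if_neg hi]

lemma cG_zf {m : ℕ} (h : 0 < m) : cG m (Sum.inl (⟨0, h⟩, false)) = m := rfl

lemma cG_zt {m : ℕ} (h : 0 < m) : cG m (Sum.inl (⟨0, h⟩, true)) = m + 1 := rfl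

lemma grundy_cG (m : ℕ) (hm : 2 ≤ m) : IsGrundyColoring (GG m) (m + 1) (cG m) := by
  have h0m : 0 < m := by omega
  constructor
  · refine ⟨?_, ?_, ?_⟩
    · rintro (⟨p, s⟩ | ⟨s, t⟩)
      · have hp := p.isLt
        simp only [cG]
        split_ifs <;> (rw [Finset.mem_Icc]; omega)
      · simp only [cG]
        split_ifs <;> (rw [Finset.mem_Icc]; omega)
    · rintro (⟨p, s⟩ | ⟨s, t⟩) (⟨q, s'⟩ | ⟨s', t'⟩) hadj
      · obtain ⟨hs, hpq⟩ := GG_adj_ll.mp hadj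
        have hp := p.isLt; have hq := q.isLt
        simp only [cG]
        cases s <;> cases s' <;> simp_all <;> split_ifs <;> omega
      · exact absurd hadj GG_adj_lr
      · exact absurd hadj GG_adj_rl
      · obtain ⟨hss, htt, hor⟩ := GG_adj_rr.mp hadj
        subst hss
        simp only [cG]
        split_ifs with h1 h2 h3
        · exact absurd (h1.trans h2.symm) htt
        · omega
        · omega
        · rcases hor with hh | hh
          · exact absurd hh h1
          · exact absurd hh h3
    · intro i hi
      rw [Finset.mem_Icc] at hi
      by_cases him : i = m
      · exact ⟨Sum.inl (⟨0, h0m⟩, false), by rw [cG_zf, him]⟩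
      · by_cases him1 : i = m + 1
        · exact ⟨Sum.inl (⟨0, h0m⟩, true), by rw [cG_zt, him1]⟩
        · exact ⟨Sum.inl (⟨i, by omega⟩, false), cG_pair (by omega) (by omega) false⟩
  · rintro (⟨p, s⟩ | ⟨s, t⟩) i hi hlt <;> rw [Finset.mem_Icc] at hi
    · simp only [cG] at hlt
      by_cases hp0 : p.val = 0
      · rw [if_pos hp0] at hlt
        cases s
        · have hlt' : i < m := by simpa using hlt
          refine ⟨Sum.inl (⟨i, by omega⟩, true), ?_, cG_pair (by omega) (by omega) true⟩
          rw [GG_adj_ll]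
          exact ⟨by simp, Or.inl (show ¬ (p.val = i) by omega)⟩
        · have hlt' : i < m + 1 := by simpa using hlt
          by_cases him : i = m
          · refine ⟨Sum.inl (⟨0, h0m⟩, false), ?_, by rw [cG_zf, him]⟩
            rw [GG_adj_ll]
            exact ⟨by simp, Or.inr ⟨hp0, rfl⟩⟩
          · refine ⟨Sum.inl (⟨i, by omega⟩, false), ?_, cG_pair (by omega) (by omega) false⟩
            rw [GG_adj_ll]
            exact ⟨by simp, Or.inl (show ¬ (p.val = i) by omega)⟩
      · rw [if_neg hp0] at hlt
        have hp := p.isLt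
        refine ⟨Sum.inl (⟨i, by omega⟩, !s), ?_, cG_pair (by omega) (by omega) (!s)⟩
        rw [GG_adj_ll]
        exact ⟨by cases s <;> simp, Or.inl (show ¬ (p.val = i) by omega)⟩
    · simp only [cG] at hlt
      split_ifs at hlt with hts
      · have hi1 : i = 1 := by omega
        haveI : Nontrivial (Fin m) := Fin.nontrivial_iff_two_le.mpr hm
        obtain ⟨t', ht'⟩ := exists_ne s
        refine ⟨Sum.inr (s, t'), ?_, ?_⟩
        · rw [GG_adj_rr]
          refine ⟨rfl, ?_, Or.inl hts⟩
          rw [hts]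
          exact Ne.symm ht'
        · subst hi1
          simp only [cG]
          exact if_neg ht'
      · omega

lemma b_cB (m : ℕ) (hm : 2 ≤ m) : IsBColoring (GG m) m (cB m) := by
  constructor
  · refine ⟨?_, ?_, ?_⟩
    · rintro (⟨p, s⟩ | ⟨s, t⟩)
      · simp only [cB]
        split_ifs <;> (rw [Finset.mem_Icc]; omega)
      · have := t.isLt
        simp only [cB]
        rw [Finset.mem_Icc]; omega
    · rintro (⟨p, s⟩ | ⟨s, t⟩) (⟨q, s'⟩ | ⟨s', t'⟩) hadj
      · obtain ⟨hs, -⟩ := GG_adj_ll.mp hadj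
        simp only [cB]
        cases s <;> cases s' <;> simp_all
      · exact absurd hadj GG_adj_lr
      · exact absurd hadj GG_adj_rl
      · obtain ⟨-, htt, -⟩ := GG_adj_rr.mp hadj
        simp only [cB]
        have : t.val ≠ t'.val := fun hc => htt (Fin.ext hc)
        omega
    · intro i hi
      rw [Finset.mem_Icc] at hi
      refine ⟨Sum.inr (⟨i - 1, by omega⟩, ⟨i - 1, by omega⟩), ?_⟩
      simp only [cB]
      omega
  · intro i hi
    rw [Finset.mem_Icc] at hi
    refine ⟨Sum.inr (⟨i - 1, by omega⟩, ⟨i - 1, by omega⟩), by simp only [cB]; omega, ?_⟩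
    intro j hj hji
    rw [Finset.mem_Icc] at hj
    simp only [cB] at hji
    refine ⟨Sum.inr (⟨i - 1, by omega⟩, ⟨j - 1, by omega⟩), ?_, ?_⟩
    · rw [GG_adj_rr]
      refine ⟨rfl, ?_, Or.inl rfl⟩
      intro hc
      rw [Fin.ext_iff] at hc
      simp at hc
      omega
    · simp only [cB]
      omega

lemma z_le {m k : ℕ} (hm : 2 ≤ m) {c : Vtx m → ℕ} (h : IsZColoring (GG m) k c) : k ≤ 3 := by
  by_contra hk4
  push_neg at hk4
  obtain ⟨hg, -, u, hu, hstar⟩ := h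
  have hprop := hg.1
  have h1 : (1 : ℕ) ∈ Finset.Icc 1 k := by rw [Finset.mem_Icc]; omega
  have h2 : (2 : ℕ) ∈ Finset.Icc 1 k := by rw [Finset.mem_Icc]; omega
  have h3 : (3 : ℕ) ∈ Finset.Icc 1 k := by rw [Finset.mem_Icc]; omega
  have hc1 : c (u 1) = 1 := (hu 1 h1).1
  have hcd1 : IsCDVertex (GG m) k c (u 1) := (hu 1 h1).2
  have hc2 : c (u 2) = 2 := (hu 2 h2).1
  have hcd2 : IsCDVertex (GG m) k c (u 2) := (hu 2 h2).2
  have ha1 : (GG m).Adj (u k) (u 1) := hstar 1 h1 (by omega)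
  have ha2 : (GG m).Adj (u k) (u 2) := hstar 2 h2 (by omega)
  rcases hko : u k with (⟨z, sb⟩ | ⟨s, t⟩)
  · -- u k is in the crown part, on side sb
    rw [hko] at ha1 ha2
    obtain ⟨x₁, s₁, hux1, hs₁⟩ : ∃ x s', u 1 = Sum.inl (x, s') ∧ sb ≠ s' := by
      rcases hu1e : u 1 with (⟨x, s'⟩ | y)
      · rw [hu1e] at ha1; exact ⟨x, s', rfl, (GG_adj_ll.mp ha1).1⟩
      · rw [hu1e] at ha1; exact absurd ha1 GG_adj_lr
    obtain ⟨x₂, s₂, hux2, hs₂⟩ : ∃ x s', u 2 = Sum.inl (x, s') ∧ sb ≠ s' := by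
      rcases hu2e : u 2 with (⟨x, s'⟩ | y)
      · rw [hu2e] at ha2; exact ⟨x, s', rfl, (GG_adj_ll.mp ha2).1⟩
      · rw [hu2e] at ha2; exact absurd ha2 GG_adj_lr
    -- every color appears on side sb
    have hside : ∀ j, 1 ≤ j → j ≤ k → ∃ p : Fin m, c (Sum.inl (p, sb)) = j := by
      intro j hj1 hjk
      by_cases hj : j = 1
      · obtain ⟨w, hw, hcw⟩ := hcd2 j (Finset.mem_Icc.mpr ⟨hj1, hjk⟩) (by rw [hc2]; omega)
        rw [hux2] at hw
        rcases hwe : w with (⟨p, s''⟩ | y)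
        · rw [hwe] at hw hcw
          have hne := (GG_adj_ll.mp hw).1
          have hss : s'' = sb := by
            revert hs₂ hne; cases sb <;> cases s₂ <;> cases s'' <;> simp
          subst hss
          exact ⟨p, hcw⟩
        · rw [hwe] at hw; exact absurd hw GG_adj_lr
      · obtain ⟨w, hw, hcw⟩ := hcd1 j (Finset.mem_Icc.mpr ⟨hj1, hjk⟩) (by rw [hc1]; omega)
        rw [hux1] at hw
        rcases hwe : w with (⟨p, s''⟩ | y)
        · rw [hwe] at hw hcw
          have hne := (GG_adj_ll.mp hw).1
          have hss : s'' = sb := by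
            revert hs₁ hne; cases sb <;> cases s₁ <;> cases s'' <;> simp
          subst hss
          exact ⟨p, hcw⟩
        · rw [hwe] at hw; exact absurd hw GG_adj_lr
    -- the vertex (0, s₁) is adjacent to everything on side sb: contradiction
    have hw0 : c (Sum.inl ((⟨0, by omega⟩ : Fin m), s₁)) ∈ Finset.Icc 1 k :=
      hprop.1 _
    rw [Finset.mem_Icc] at hw0
    obtain ⟨p, hp⟩ := hside _ hw0.1 hw0.2
    have hadj : (GG m).Adj (Sum.inl (p, sb)) (Sum.inl ((⟨0, by omega⟩ : Fin m), s₁)) := by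
      rw [GG_adj_ll]
      refine ⟨hs₁, ?_⟩
      by_cases hp0 : p.val = 0
      · exact Or.inr ⟨hp0, rfl⟩
      · exact Or.inl (by simpa using hp0)
    exact hprop.2.1 _ _ hadj (by rw [hp])
  · -- u k is in a star
    rw [hko] at ha1 ha2
    obtain ⟨t₁, hut1, ht1, hor1⟩ :
        ∃ t₁, u 1 = Sum.inr (s, t₁) ∧ t ≠ t₁ ∧ (t = s ∨ t₁ = s) := by
      rcases hu1e : u 1 with (x | ⟨s', t'⟩)
      · rw [hu1e] at ha1; exact absurd ha1 GG_adj_rl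
      · rw [hu1e] at ha1
        obtain ⟨hss, htt, hor⟩ := GG_adj_rr.mp ha1
        subst hss
        exact ⟨t', rfl, htt, hor⟩
    obtain ⟨t₂, hut2, ht2, hor2⟩ :
        ∃ t₂, u 2 = Sum.inr (s, t₂) ∧ t ≠ t₂ ∧ (t = s ∨ t₂ = s) := by
      rcases hu2e : u 2 with (x | ⟨s', t'⟩)
      · rw [hu2e] at ha2; exact absurd ha2 GG_adj_rl
      · rw [hu2e] at ha2
        obtain ⟨hss, htt, hor⟩ := GG_adj_rr.mp ha2
        subst hss
        exact ⟨t', rfl, htt, hor⟩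
    by_cases hts : t = s
    · -- u k is the center, u 1 is a leaf; its only neighbor is the center
      have ht₁s : t₁ ≠ s := fun hc => ht1 (hts.trans hc.symm)
      obtain ⟨w2, hw2adj, hw2c⟩ := hcd1 2 h2 (by rw [hc1]; omega)
      obtain ⟨w3, hw3adj, hw3c⟩ := hcd1 3 h3 (by rw [hc1]; omega)
      rw [hut1] at hw2adj hw3adj
      have hcen : ∀ w, (GG m).Adj (Sum.inr (s, t₁)) w → w = Sum.inr (s, s) := by
        intro w hw
        rcases hwe : w with (x | ⟨s', t'⟩)
        · rw [hwe] at hw; exact absurd hw GG_adj_rl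
        · rw [hwe] at hw
          obtain ⟨hss, htt, hor⟩ := GG_adj_rr.mp hw
          subst hss
          rcases hor with hh | hh
          · exact absurd hh ht₁s
          · rw [hh]
      have e2 := hcen w2 hw2adj
      have e3 := hcen w3 hw3adj
      rw [e2] at hw2c
      rw [e3] at hw3c
      omega
    · -- u k is a leaf: u 1 and u 2 both equal the center
      have h1c : t₁ = s := hor1.resolve_left hts
      have h2c : t₂ = s := hor2.resolve_left hts
      have he : u 1 = u 2 := by rw [hut1, hut2, h1c, h2c]
      have : (1 : ℕ) = 2 := by rw [← hc1, ← hc2, he]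
      omega

/-- For every positive integer `n` there exists a finite simple graph `G`
with `Γ(G) ≥ n`, `b(G) ≥ n` and `z(G) ≤ 3`. -/
theorem statement_5 (n : ℕ) (hn : 1 ≤ n) :
    ∃ (V : Type) (_ : Fintype V) (G : SimpleGraph V),
      n ≤ grundyNumber G ∧ n ≤ bNumber G ∧ zNumber G ≤ 3 := by
  set m := max n 2 with hmdef
  have hm : 2 ≤ m := le_max_right n 2
  have hnm : n ≤ m := le_max_left n 2
  haveI : Nonempty (Vtx m) := ⟨Sum.inl (⟨0, by omega⟩, false)⟩
  refine ⟨Vtx m, inferInstance, GG m, ?_, ?_, ?_⟩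
  · have hmem : (m + 1) ∈ {k | ∃ c : Vtx m → ℕ, IsGrundyColoring (GG m) k c} :=
      ⟨cG m, grundy_cG m hm⟩
    have hbdd : BddAbove {k | ∃ c : Vtx m → ℕ, IsGrundyColoring (GG m) k c} := by
      refine ⟨Fintype.card (Vtx m), ?_⟩
      rintro x ⟨c, hc⟩
      exact proper_card_le hc.1
    calc n ≤ m + 1 := by omega
      _ ≤ grundyNumber (GG m) := le_csSup hbdd hmem
  · have hmem : m ∈ {k | ∃ c : Vtx m → ℕ, IsBColoring (GG m) k c} :=
      ⟨cB m, b_cB m hm⟩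
    have hbdd : BddAbove {k | ∃ c : Vtx m → ℕ, IsBColoring (GG m) k c} := by
      refine ⟨Fintype.card (Vtx m), ?_⟩
      rintro x ⟨c, hc⟩
      exact proper_card_le hc.1
    calc n ≤ m := hnm
      _ ≤ bNumber (GG m) := le_csSup hbdd hmem
  · apply csSup_le'
    rintro x ⟨c, hc⟩
    calc x ≤ 3 := z_le hm hc
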